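/- Let κ ∈ ℝ and let μ : ℝ² → ℝ be locally integrable and anti-symmetric with respect to the line α + β = κ, i.e. μ(α,β) = −μ(κ − β, κ − α) for all (α,β) with α > β. Then for every b₀ ≤ κ/2, setting a₀ := κ − b₀, one has ∬_{T(b₀,a₀)} μ(α,β)·(α − β) dα dβ = 0. Hence the major hysteresis loop of the Preisach operator with weighting μ generated by a periodic input whose minimum b₀ and maximum a₀ satisfy a₀ + b₀ = κ encloses zero signed area, so this Preisach operator is a butterfly hysteresis operator. -/

import Mathlib

/-!
STATEMENT 3: If μ is locally integrable and anti-symmetric with respect to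
the line α + β = κ (i.e. μ(α,β) = −μ(κ−β, κ−α) on the Preisach plane α > β),
then for every b₀ ≤ κ/2, with a₀ := κ − b₀,
∬_{T(b₀,a₀)} μ(α,β)(α−β) dα dβ = 0: the Preisach operator with weighting μ is
a butterfly hysteresis operator.
-/

open MeasureTheory

/-- The triangular subregion `T(b₀,a₀) = {(α,β) : b₀ ≤ β ≤ α ≤ a₀}` of the
Preisach plane (points are `p = (α, β)`). -/
def preisachTriangle (b₀ a₀ : ℝ) : Set (ℝ × ℝ) :=
  {p : ℝ × ℝ | b₀ ≤ p.2 ∧ p.2 ≤ p.1 ∧ p.1 ≤ a₀}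

theorem antisymmetric_weight_zero_signed_area
    (κ : ℝ) (μ : ℝ × ℝ → ℝ)
    (hloc : LocallyIntegrable μ volume)
    (hanti : ∀ α β : ℝ, β < α → μ (α, β) = -μ (κ - β, κ - α)) :
    ∀ b₀ : ℝ, b₀ ≤ κ / 2 →
      (∫ p in preisachTriangle b₀ (κ - b₀), μ p * (p.1 - p.2)) = 0 := by
  intro b₀ _
  set φ : ℝ × ℝ → ℝ × ℝ := fun p => (κ - p.2, κ - p.1) with hφ
  have hinv : Function.Involutive φ := by
    intro p; simp [hφ]
  have hmeas : Measurable φ := by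
    apply Measurable.prod <;> fun_prop
  have hemb : MeasurableEmbedding φ :=
    (MeasurableEquiv.ofInvolutive φ hinv hmeas).measurableEmbedding
  have hmp : MeasurePreserving φ (volume : Measure (ℝ × ℝ)) volume := by
    have h1 : MeasurePreserving (fun x : ℝ => κ - x) volume volume :=
      Measure.measurePreserving_sub_left volume κ
    have h2 : MeasurePreserving (Prod.swap : ℝ × ℝ → ℝ × ℝ)
        ((volume : Measure ℝ).prod volume) ((volume : Measure ℝ).prod volume) :=
      Measure.measurePreserving_swap
    have h3 := (h1.prod h1).comp h2
    simpa [hφ, Function.comp_def, ← Measure.volume_eq_prod, Prod.map, Prod.swap] using h3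
  set T := preisachTriangle b₀ (κ - b₀) with hT
  have himg : φ '' T = T := by
    have hsub : ∀ p ∈ T, φ p ∈ T := by
      rintro ⟨a, b⟩ ⟨h1, h2, h3⟩
      simp only [hφ, hT, preisachTriangle, Set.mem_setOf_eq] at *
      refine ⟨by linarith, by linarith, by linarith⟩
    apply Set.Subset.antisymm
    · rintro q ⟨p, hp, rfl⟩; exact hsub p hp
    · intro p hp
      exact ⟨φ p, hsub p hp, hinv p⟩
  have key : (∫ p in T, μ p * (p.1 - p.2))
      = ∫ p in T, μ (φ p) * ((φ p).1 - (φ p).2) := by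
    conv_lhs => rw [← himg]
    exact hmp.setIntegral_image_emb hemb _ T
  have hTmeas : MeasurableSet T := by
    have : T = {p : ℝ × ℝ | b₀ ≤ p.2} ∩ {p : ℝ × ℝ | p.2 ≤ p.1} ∩ {p : ℝ × ℝ | p.1 ≤ κ - b₀} := by
      ext p; simp [hT, preisachTriangle, and_assoc]
    rw [this]
    exact ((measurableSet_le measurable_const measurable_snd).inter
      (measurableSet_le measurable_snd measurable_fst)).inter
      (measurableSet_le measurable_fst measurable_const)
  have hneg : (∫ p in T, μ (φ p) * ((φ p).1 - (φ p).2))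
      = ∫ p in T, -(μ p * (p.1 - p.2)) := by
    apply setIntegral_congr_fun hTmeas
    rintro ⟨a, b⟩ ⟨_, h2, _⟩
    simp only [hφ] at *
    rcases eq_or_lt_of_le h2 with h | h
    · subst h; ring
    · rw [hanti a b h]; ring
  have hfin := key.trans (hneg.trans (integral_neg (fun p : ℝ × ℝ => μ p * (p.1 - p.2))))
  linarith
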